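/- Let D and K be finite-dimensional vector spaces over ℂ and H = D × K. For F ∈ End(H), write F^{DD} : D → D, F^{DK} : K → D, F^{KD} : D → K, F^{KK} : K → K for the block components of F. For F ∈ End(H) and A ∈ Hom(D,K), set L_F(A) := −F^{KD} − F^{KK} ∘ A + A ∘ F^{DD} + A ∘ F^{DK} ∘ A, and set η_{D,K}(F,G) := tr(F^{DK} ∘ G^{KD}) − tr(G^{DK} ∘ F^{KD}). Then for all F, G ∈ End(H) and all A ∈ Hom(D,K): tr(G^{DK} ∘ L_F(A)) − tr(F^{DK} ∘ L_G(A)) = tr([F,G]^{DK} ∘ A) + η_{D,K}(F,G), where [F,G] = F ∘ G − G ∘ F. -/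
import Mathlib


section

variable {D K : Type*} [AddCommGroup D] [Module ℂ D] [AddCommGroup K] [Module ℂ K]

/-- The block component `F^{DD} : D → D` of `F ∈ End(D × K)`. -/
noncomputable def blockDD (F : (D × K) →ₗ[ℂ] (D × K)) : D →ₗ[ℂ] D :=
  LinearMap.fst ℂ D K ∘ₗ F ∘ₗ LinearMap.inl ℂ D K

/-- The block component `F^{DK} : K → D` of `F ∈ End(D × K)`. -/
noncomputable def blockDK (F : (D × K) →ₗ[ℂ] (D × K)) : K →ₗ[ℂ] D :=
  LinearMap.fst ℂ D K ∘ₗ F ∘ₗ LinearMap.inr ℂ D K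

/-- The block component `F^{KD} : D → K` of `F ∈ End(D × K)`. -/
noncomputable def blockKD (F : (D × K) →ₗ[ℂ] (D × K)) : D →ₗ[ℂ] K :=
  LinearMap.snd ℂ D K ∘ₗ F ∘ₗ LinearMap.inl ℂ D K

/-- The block component `F^{KK} : K → K` of `F ∈ End(D × K)`. -/
noncomputable def blockKK (F : (D × K) →ₗ[ℂ] (D × K)) : K →ₗ[ℂ] K :=
  LinearMap.snd ℂ D K ∘ₗ F ∘ₗ LinearMap.inr ℂ D K

/-- The vector field of the `𝔤𝔩`-action in the chart `Hom(D,K)`: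
`L_F(A) = −F^{KD} − F^{KK} ∘ A + A ∘ F^{DD} + A ∘ F^{DK} ∘ A`. -/
noncomputable def glFlow (F : (D × K) →ₗ[ℂ] (D × K)) (A : D →ₗ[ℂ] K) : D →ₗ[ℂ] K :=
  -blockKD F - blockKK F ∘ₗ A + A ∘ₗ blockDD F + A ∘ₗ blockDK F ∘ₗ A

/-- The cocycle `η_{D,K}(F,G) = tr(F^{DK} ∘ G^{KD}) − tr(G^{DK} ∘ F^{KD})`. -/
noncomputable def etaDK (F G : (D × K) →ₗ[ℂ] (D × K)) : ℂ :=
  LinearMap.trace ℂ D (blockDK F ∘ₗ blockKD G) - LinearMap.trace ℂ D (blockDK G ∘ₗ blockKD F)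

end


section Aux

variable {D K : Type*} [AddCommGroup D] [Module ℂ D] [AddCommGroup K] [Module ℂ K]

lemma blockDK_comp (F G : (D × K) →ₗ[ℂ] (D × K)) :
    blockDK (F ∘ₗ G) = blockDD F ∘ₗ blockDK G + blockDK F ∘ₗ blockKK G := by
  ext x
  have h : G (0, x) = ((G (0, x)).1, 0) + ((0 : D), (G (0, x)).2) := by
    ext <;> simp
  simp only [blockDK, blockDD, blockKK, LinearMap.comp_apply, LinearMap.add_apply,
    LinearMap.inr_apply, LinearMap.inl_apply, LinearMap.fst_apply, LinearMap.snd_apply]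
  rw [h, map_add]
  simp

lemma blockDK_sub (F G : (D × K) →ₗ[ℂ] (D × K)) :
    blockDK (F - G) = blockDK F - blockDK G := by
  simp [blockDK, LinearMap.comp_sub, LinearMap.sub_comp]

lemma key_trace {D K : Type*} [AddCommGroup D] [Module ℂ D] [FiniteDimensional ℂ D]
    [AddCommGroup K] [Module ℂ K] [FiniteDimensional ℂ K]
    (a a' : K →ₗ[ℂ] D) (b b' : D →ₗ[ℂ] K) (c c' : D →ₗ[ℂ] D) (d d' : K →ₗ[ℂ] K)
    (A : D →ₗ[ℂ] K) :
    LinearMap.trace ℂ D (a' ∘ₗ (-b - d ∘ₗ A + A ∘ₗ c + A ∘ₗ a ∘ₗ A)) -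
      LinearMap.trace ℂ D (a ∘ₗ (-b' - d' ∘ₗ A + A ∘ₗ c' + A ∘ₗ a' ∘ₗ A)) =
    LinearMap.trace ℂ D ((c ∘ₗ a' + a ∘ₗ d' - (c' ∘ₗ a + a' ∘ₗ d)) ∘ₗ A) +
      (LinearMap.trace ℂ D (a ∘ₗ b') - LinearMap.trace ℂ D (a' ∘ₗ b)) := by
  have h1 : LinearMap.trace ℂ D (a' ∘ₗ (A ∘ₗ c)) =
      LinearMap.trace ℂ D ((c ∘ₗ a') ∘ₗ A) := by
    rw [show a' ∘ₗ (A ∘ₗ c) = (a' ∘ₗ A) ∘ₗ c from rfl,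
      LinearMap.trace_comp_comm' c (a' ∘ₗ A)]
    rfl
  have h2 : LinearMap.trace ℂ D (a ∘ₗ (A ∘ₗ c')) =
      LinearMap.trace ℂ D ((c' ∘ₗ a) ∘ₗ A) := by
    rw [show a ∘ₗ (A ∘ₗ c') = (a ∘ₗ A) ∘ₗ c' from rfl,
      LinearMap.trace_comp_comm' c' (a ∘ₗ A)]
    rfl
  have h3 : LinearMap.trace ℂ D (a' ∘ₗ (d ∘ₗ A)) =
      LinearMap.trace ℂ D ((a' ∘ₗ d) ∘ₗ A) := rfl
  have h4 : LinearMap.trace ℂ D (a ∘ₗ (d' ∘ₗ A)) =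
      LinearMap.trace ℂ D ((a ∘ₗ d') ∘ₗ A) := rfl
  have h5 : LinearMap.trace ℂ D (a' ∘ₗ (A ∘ₗ a ∘ₗ A)) =
      LinearMap.trace ℂ D (a ∘ₗ (A ∘ₗ a' ∘ₗ A)) := by
    have e1 : a' ∘ₗ (A ∘ₗ a ∘ₗ A) = (a' ∘ₗ A) ∘ₗ (a ∘ₗ A) := rfl
    have e2 : a ∘ₗ (A ∘ₗ a' ∘ₗ A) = (a ∘ₗ A) ∘ₗ (a' ∘ₗ A) := rfl
    rw [e1, e2, LinearMap.trace_comp_comm' (a ∘ₗ A) (a' ∘ₗ A)]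
  simp only [LinearMap.comp_add, LinearMap.comp_sub, LinearMap.comp_neg,
    LinearMap.add_comp, LinearMap.sub_comp, map_add, map_sub, map_neg]
  linear_combination h1 - h2 - h3 + h4 + h5

end Aux

/-- The trace identity for the scalar part of the lifted `𝔤𝔩`-action on the determinant
line bundle: for finite-dimensional `D`, `K` and all `F, G ∈ End(D × K)`, `A ∈ Hom(D,K)`,
`tr(G^{DK} ∘ L_F(A)) − tr(F^{DK} ∘ L_G(A)) = tr([F,G]^{DK} ∘ A) + η_{D,K}(F,G)`,
where `[F,G] = F ∘ G − G ∘ F`. -/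
theorem trace_cocycle_identity
    {D K : Type*} [AddCommGroup D] [Module ℂ D] [FiniteDimensional ℂ D]
    [AddCommGroup K] [Module ℂ K] [FiniteDimensional ℂ K]
    (F G : (D × K) →ₗ[ℂ] (D × K)) (A : D →ₗ[ℂ] K) :
    LinearMap.trace ℂ D (blockDK G ∘ₗ glFlow F A) -
        LinearMap.trace ℂ D (blockDK F ∘ₗ glFlow G A) =
      LinearMap.trace ℂ D (blockDK (F ∘ₗ G - G ∘ₗ F) ∘ₗ A) + etaDK F G := by
  simp only [glFlow, etaDK, blockDK_sub, blockDK_comp, LinearMap.sub_comp]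
  have := key_trace (blockDK F) (blockDK G) (blockKD F) (blockKD G)
    (blockDD F) (blockDD G) (blockKK F) (blockKK G) A
  simp only [LinearMap.sub_comp, LinearMap.add_comp, map_add, map_sub] at this ⊢
  linear_combination this
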